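/- Convexity of recursive rankers: for every recursive ranker formula φ of TL⁺[X_φ,Y_φ] and every nonempty finite word w, if i < j, w,i ⊨ φ, and w,j ⊨ φ, then w,k ⊨ φ for all k with i < k < j. In other words, the set of positions satisfying φ is an interval (convex subset) of dom(w). -/

import Mathlib

/-- Letter at 1-based position `i` of word `w`. -/
def letterAt {A : Type} (w : List A) (i : ℕ) : Option A := w[i - 1]?

mutual
/-- Recursive rankers of TL⁺[X_φ,Y_φ]: φ ::= ⊤ | SP φ | EP φ | X_ψ φ | Y_ψ φ. -/
inductive RForm (A : Type) where
  | top
  | SP (φ : RForm A)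
  | EP (φ : RForm A)
  | X (ψ : GForm A) (φ : RForm A)
  | Y (ψ : GForm A) (φ : RForm A)

/-- General formulas of TL⁺[X_φ,Y_φ]: ψ ::= a | φ | ψ∨ψ | ¬ψ. -/
inductive GForm (A : Type) where
  | atom (a : A)
  | rk (φ : RForm A)
  | or (ψ₁ ψ₂ : GForm A)
  | not (ψ : GForm A)
end

mutual
/-- Satisfaction of recursive rankers at (1-based) positions of a word. -/
def SatR {A : Type} (w : List A) : ℕ → RForm A → Prop
  | _, .top => True
  | _, .SP φ => SatR w 1 φ
  | _, .EP φ => SatR w w.length φ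
  | i, .X ψ φ => ∃ j, i < j ∧ j ≤ w.length ∧ SatG w j ψ ∧ SatR w j φ ∧
      ∀ k, i < k → k < j → ¬ SatG w k ψ
  | i, .Y ψ φ => ∃ j, 1 ≤ j ∧ j < i ∧ SatG w j ψ ∧ SatR w j φ ∧
      ∀ k, j < k → k < i → ¬ SatG w k ψ

/-- Satisfaction of general formulas. -/
def SatG {A : Type} (w : List A) : ℕ → GForm A → Prop
  | i, .atom a => letterAt w i = some a
  | i, .rk φ => SatR w i φ
  | i, .or ψ₁ ψ₂ => SatG w i ψ₁ ∨ SatG w i ψ₂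
  | i, .not ψ => ¬ SatG w i ψ
end

theorem rr_convex_aux {A : Type} : ∀ (φ : RForm A) (w : List A) (i j : ℕ), i < j →
    SatR w i φ → SatR w j φ → ∀ k, i < k → k < j → SatR w k φ
  | .top, w, i, j, hij, hi, hj, k, hik, hkj => trivial
  | .SP φ, w, i, j, hij, hi, hj, k, hik, hkj => hi
  | .EP φ, w, i, j, hij, hi, hj, k, hik, hkj => hi
  | .X ψ φ, w, i, j, hij, hi, hj, k, hik, hkj => by
    classical
    obtain ⟨j₁, hij₁, hj₁len, hψ₁, hφ₁, hmin₁⟩ := hi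
    obtain ⟨j₂, hjj₂, hj₂len, hψ₂, hφ₂, hmin₂⟩ := hj
    by_cases hc : k < j₁
    · exact ⟨j₁, hc, hj₁len, hψ₁, hφ₁, fun k' hk' hk'' =>
        hmin₁ k' (lt_trans hik hk') hk''⟩
    · push_neg at hc
      have hex : ∃ m, k < m ∧ SatG w m ψ := ⟨j₂, lt_trans hkj hjj₂, hψ₂⟩
      set m := Nat.find hex with hm
      obtain ⟨hkm, hψm⟩ := Nat.find_spec hex
      have hmj₂ : m ≤ j₂ := Nat.find_min' hex ⟨lt_trans hkj hjj₂, hψ₂⟩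
      have hj₁m : j₁ < m := lt_of_le_of_lt hc hkm
      have hφm : SatR w m φ := by
        rcases eq_or_lt_of_le hmj₂ with h | h
        · exact h ▸ hφ₂
        · exact rr_convex_aux φ w j₁ j₂ (lt_trans hj₁m h) hφ₁ hφ₂ m hj₁m h
      refine ⟨m, hkm, le_trans hmj₂ hj₂len, hψm, hφm, fun k' hk' hk'' hψ' => ?_⟩
      exact Nat.find_min hex hk'' ⟨hk', hψ'⟩
  | .Y ψ φ, w, i, j, hij, hi, hj, k, hik, hkj => by
    classical
    obtain ⟨j₁, hj₁1, hj₁i, hψ₁, hφ₁, hmin₁⟩ := hi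
    obtain ⟨j₂, hj₂1, hj₂j, hψ₂, hφ₂, hmin₂⟩ := hj
    by_cases hc : j₂ < k
    · exact ⟨j₂, hj₂1, hc, hψ₂, hφ₂, fun k' hk' hk'' =>
        hmin₂ k' hk' (lt_trans hk'' hkj)⟩
    · push_neg at hc
      have hj₁k : j₁ < k := lt_trans hj₁i hik
      set m := Nat.findGreatest (fun m => SatG w m ψ) (k - 1) with hm
      have hj₁m : j₁ ≤ m := Nat.le_findGreatest (Nat.le_sub_one_of_lt hj₁k) hψ₁
      have hm1 : 1 ≤ m := le_trans hj₁1 hj₁m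
      have hψm : SatG w m ψ := by
        rw [hm]
        exact Nat.findGreatest_spec (P := fun m => SatG w m ψ)
          (Nat.le_sub_one_of_lt hj₁k) hψ₁
      have hmk : m < k := lt_of_le_of_lt (Nat.findGreatest_le _)
        (Nat.sub_lt (lt_of_le_of_lt (Nat.zero_le _) hik) Nat.zero_lt_one)
      have hmj₂ : m ≤ j₂ := le_trans (le_of_lt hmk) hc
      have hφm : SatR w m φ := by
        rcases eq_or_lt_of_le hj₁m with h | h
        · exact h ▸ hφ₁
        · rcases eq_or_lt_of_le hmj₂ with h2 | h2
          · exact h2 ▸ hφ₂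
          · exact rr_convex_aux φ w j₁ j₂ (lt_trans h h2) hφ₁ hφ₂ m h h2
      refine ⟨m, hm1, hmk, hψm, hφm, fun k' hk' hk'' hψ' => ?_⟩
      exact Nat.findGreatest_is_greatest hk' (Nat.le_sub_one_of_lt hk'') hψ'


/-- **convexity of recursive rankers.** For every recursive ranker
formula `φ` of TL⁺[X_φ,Y_φ] and every nonempty finite word `w`, the set of
positions satisfying `φ` is convex: if `i < j` both satisfy `φ` then so does
every `k` with `i < k < j`. -/
theorem recursive_ranker_convex {A : Type} (φ : RForm A) (w : List A) (hw : w ≠ [])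
    (i j : ℕ) (hij : i < j) (hi : SatR w i φ) (hj : SatR w j φ) :
    ∀ k, i < k → k < j → SatR w k φ :=
  rr_convex_aux φ w i j hij hi hj
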